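/- Let κ > 0, C > 0, T ≥ e, and let X : [T,∞) → ℝ² be continuously differentiable with X(t) ≠ 0 for all t ≥ T. Suppose that t³·det(X(t), Ẋ(t)) = κ for all t ≥ T, and that ‖X(t)‖ ≤ C·(log t)/t² for all t ≥ T. Then ∫_T^∞ ‖Ẋ(t)‖ dt = ∞. (Indeed, the component of Ẋ(t) orthogonal to X(t) has norm κ/(t³·‖X(t)‖) ≥ κ/(C·t·log t).) -/

import Mathlib

lemma abs_det_le_aux (x y : EuclideanSpace ℝ (Fin 2)) :
    |x 0 * y 1 - x 1 * y 0| ≤ ‖x‖ * ‖y‖ := by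
  have hx : ‖x‖ ^ 2 = x 0 ^ 2 + x 1 ^ 2 := by
    rw [EuclideanSpace.norm_eq, Fin.sum_univ_two, Real.sq_sqrt (by positivity)]
    simp [sq_abs]
  have hy : ‖y‖ ^ 2 = y 0 ^ 2 + y 1 ^ 2 := by
    rw [EuclideanSpace.norm_eq, Fin.sum_univ_two, Real.sq_sqrt (by positivity)]
    simp [sq_abs]
  have hab : 0 ≤ ‖x‖ * ‖y‖ := mul_nonneg (norm_nonneg _) (norm_nonneg _)
  rw [abs_le]
  constructor
  · nlinarith [sq_nonneg (x 0 * y 0 + x 1 * y 1),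
      sq_nonneg (‖x‖ * ‖y‖ + (x 0 * y 1 - x 1 * y 0))]
  · nlinarith [sq_nonneg (x 0 * y 0 + x 1 * y 1),
      sq_nonneg (‖x‖ * ‖y‖ - (x 0 * y 1 - x 1 * y 0))]

/-- if `X : [T,∞) → ℝ²` is `C¹`, never zero, with conserved angular
momentum `t³·det(X(t), Ẋ(t)) = κ > 0` and `‖X(t)‖ ≤ C·(log t)/t²`, then
`∫_T^∞ ‖Ẋ(t)‖ dt = ∞`. -/
theorem infinite_path_length_from_conserved_momentum
    (κ C T : ℝ) (hκ : 0 < κ) (hC : 0 < C) (hT : Real.exp 1 ≤ T)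
    (X X' : ℝ → EuclideanSpace ℝ (Fin 2))
    (hX' : ∀ t ≥ T, HasDerivAt X (X' t) t)
    (hX'cont : ContinuousOn X' (Set.Ici T))
    (hne : ∀ t ≥ T, X t ≠ 0)
    (hmom : ∀ t ≥ T, t ^ 3 * (X t 0 * X' t 1 - X t 1 * X' t 0) = κ)
    (hbound : ∀ t ≥ T, ‖X t‖ ≤ C * Real.log t / t ^ 2) :
    (∫⁻ t in Set.Ici T, (‖X' t‖₊ : ENNReal)) = ⊤ := by
  have he : (1:ℝ) < Real.exp 1 := by
    have := Real.add_one_lt_exp (x := 1) one_ne_zero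
    linarith
  have hT1 : (1:ℝ) < T := lt_of_lt_of_le he hT
  -- basic facts for t ≥ T
  have hlogpos : ∀ t ≥ T, 0 < Real.log t := fun t ht =>
    Real.log_pos (lt_of_lt_of_le hT1 ht)
  have htpos : ∀ t ≥ T, (0:ℝ) < t := fun t ht => lt_trans one_pos (lt_of_lt_of_le hT1 ht)
  set c : ℝ := κ / C with hc
  have hcpos : 0 < c := div_pos hκ hC
  set g : ℝ → ℝ := fun t => c / (t * Real.log t) with hg
  -- pointwise lower bound
  have hlb : ∀ t ≥ T, g t ≤ ‖X' t‖ := by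
    intro t ht
    have h1 : κ ≤ t ^ 3 * (‖X t‖ * ‖X' t‖) := by
      calc κ = t ^ 3 * (X t 0 * X' t 1 - X t 1 * X' t 0) := (hmom t ht).symm
        _ ≤ t ^ 3 * |X t 0 * X' t 1 - X t 1 * X' t 0| := by
            have := le_abs_self (X t 0 * X' t 1 - X t 1 * X' t 0)
            have ht0 := htpos t ht
            have h3 : (0:ℝ) ≤ t ^ 3 := by positivity
            nlinarith
        _ ≤ t ^ 3 * (‖X t‖ * ‖X' t‖) := by
            have := abs_det_le_aux (X t) (X' t)
            have ht0 := htpos t ht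
            have h3 : (0:ℝ) ≤ t ^ 3 := by positivity
            nlinarith
    have h2 : t ^ 3 * (‖X t‖ * ‖X' t‖) ≤ C * t * Real.log t * ‖X' t‖ := by
      have hb := hbound t ht
      have ht0 := htpos t ht
      have h3 : t ^ 3 * ‖X t‖ ≤ C * t * Real.log t := by
        have : t ^ 3 * ‖X t‖ ≤ t ^ 3 * (C * Real.log t / t ^ 2) := by
          have h3 : (0:ℝ) ≤ t ^ 3 := by positivity
          nlinarith
        calc t ^ 3 * ‖X t‖ ≤ t ^ 3 * (C * Real.log t / t ^ 2) := this
          _ = C * t * Real.log t := by field_simp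
      nlinarith [norm_nonneg (X' t)]
    have hkey : κ ≤ C * t * Real.log t * ‖X' t‖ := le_trans h1 h2
    have hpos : 0 < C * (t * Real.log t) := by
      have := htpos t ht; have := hlogpos t ht; positivity
    show c / (t * Real.log t) ≤ ‖X' t‖
    rw [hc, div_div, div_le_iff₀ hpos]
    nlinarith
  -- divergence of the lintegral of g
  have hmain : ∀ S ≥ T, ENNReal.ofReal (c * Real.log (Real.log S) - c * Real.log (Real.log T))
      ≤ ∫⁻ t in Set.Ici T, (‖X' t‖₊ : ENNReal) := by
    intro S hS
    have hgcont : ContinuousOn g (Set.Icc T S) := by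
      apply ContinuousOn.div continuousOn_const
      · exact ContinuousOn.mul continuousOn_id
          (Real.continuousOn_log.mono (by
            intro x hx
            simp only [Set.mem_compl_iff, Set.mem_singleton_iff]
            exact ne_of_gt (htpos x hx.1)))
      · intro x hx
        have := htpos x hx.1; have := hlogpos x hx.1
        positivity
    have hIntInt : IntervalIntegrable g MeasureTheory.volume T S := by
      apply ContinuousOn.intervalIntegrable
      rwa [Set.uIcc_of_le hS]
    have hftc : ∫ t in T..S, g t
        = c * Real.log (Real.log S) - c * Real.log (Real.log T) := by
      apply intervalIntegral.integral_eq_sub_of_hasDerivAt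
      · intro x hx
        rw [Set.uIcc_of_le hS] at hx
        have hx0 : (0:ℝ) < x := htpos x hx.1
        have hxl : 0 < Real.log x := hlogpos x hx.1
        have h1 : HasDerivAt Real.log x⁻¹ x := Real.hasDerivAt_log (ne_of_gt hx0)
        have h2 : HasDerivAt Real.log (Real.log x)⁻¹ (Real.log x) :=
          Real.hasDerivAt_log (ne_of_gt hxl)
        have h3 : HasDerivAt (fun u => Real.log (Real.log u)) ((Real.log x)⁻¹ * x⁻¹) x :=
          h2.comp x h1
        have h4 := h3.const_mul c
        convert h4 using 1
        show c / (x * Real.log x) = c * ((Real.log x)⁻¹ * x⁻¹)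
        rw [div_eq_mul_inv, mul_inv]
        ring
        rfl
      · exact hIntInt
    have h5 : ∫ t in Set.Ioc T S, g t
        = c * Real.log (Real.log S) - c * Real.log (Real.log T) := by
      rw [← intervalIntegral.integral_of_le hS]; exact hftc
    have hInt : MeasureTheory.IntegrableOn g (Set.Ioc T S) := by
      have := hIntInt.1
      exact this
    have hg_nonneg : 0 ≤ᵐ[MeasureTheory.volume.restrict (Set.Ioc T S)] g := by
      apply MeasureTheory.ae_restrict_of_forall_mem measurableSet_Ioc
      intro x hx
      have := htpos x (le_of_lt hx.1); have := hlogpos x (le_of_lt hx.1)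
      positivity
    calc ENNReal.ofReal (c * Real.log (Real.log S) - c * Real.log (Real.log T))
        = ENNReal.ofReal (∫ t in Set.Ioc T S, g t) := by rw [h5]
      _ = ∫⁻ t in Set.Ioc T S, ENNReal.ofReal (g t) :=
          MeasureTheory.ofReal_integral_eq_lintegral_ofReal hInt hg_nonneg
      _ ≤ ∫⁻ t in Set.Ici T, ENNReal.ofReal (g t) :=
          MeasureTheory.lintegral_mono_set (fun x hx => le_of_lt hx.1)
      _ ≤ ∫⁻ t in Set.Ici T, (‖X' t‖₊ : ENNReal) := by
          apply MeasureTheory.lintegral_mono_ae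
          apply MeasureTheory.ae_restrict_of_forall_mem measurableSet_Ici
          intro x hx
          rw [← ENNReal.ofReal_coe_nnreal, coe_nnnorm]
          exact ENNReal.ofReal_le_ofReal (hlb x hx)
  -- conclude
  by_contra hne'
  set L := ∫⁻ t in Set.Ici T, (‖X' t‖₊ : ENNReal) with hL
  have hLlt : L < ⊤ := lt_top_iff_ne_top.mpr hne'
  set M : ℝ := L.toReal + 1 with hM
  -- choose S with c * (loglog S - loglog T) ≥ M
  set y : ℝ := M / c + Real.log (Real.log T) with hy
  set S : ℝ := max T (Real.exp (Real.exp y)) with hS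
  have hST : T ≤ S := le_max_left _ _
  have hSe : Real.exp (Real.exp y) ≤ S := le_max_right _ _
  have hS1 : 1 < S := lt_of_lt_of_le hT1 hST
  have hloglogS : y ≤ Real.log (Real.log S) := by
    have h1 : Real.exp y ≤ Real.log S := by
      calc Real.exp y = Real.log (Real.exp (Real.exp y)) := (Real.log_exp _).symm
        _ ≤ Real.log S := Real.log_le_log (Real.exp_pos _) hSe
    calc y = Real.log (Real.exp y) := (Real.log_exp _).symm
      _ ≤ Real.log (Real.log S) := Real.log_le_log (Real.exp_pos _) h1
  have hgeM : M ≤ c * Real.log (Real.log S) - c * Real.log (Real.log T) := by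
    have : M / c ≤ Real.log (Real.log S) - Real.log (Real.log T) := by
      rw [hy] at hloglogS; linarith
    calc M = c * (M / c) := by field_simp
      _ ≤ c * (Real.log (Real.log S) - Real.log (Real.log T)) := by nlinarith
      _ = _ := by ring
  have h6 : ENNReal.ofReal M ≤ L :=
    le_trans (ENNReal.ofReal_le_ofReal hgeM) (hmain S hST)
  have h7 : L < ENNReal.ofReal M := by
    rw [hM]
    calc L = ENNReal.ofReal L.toReal := (ENNReal.ofReal_toReal hne').symm
      _ < ENNReal.ofReal (L.toReal + 1) := by
          rw [ENNReal.ofReal_lt_ofReal_iff (by positivity)]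
          linarith
  exact absurd h6 (not_le.mpr h7)
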